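/- Let Z₁, …, Zₙ be independent real random variables with E[Zᵢ] = 0, |Zᵢ| ≤ M almost surely, and Var(∑_{i=1}^n Zᵢ) ≤ ν. Then for all t > 0, P(max_{q ≤ n} |∑_{i=1}^q Zᵢ| > t) ≤ 2 exp(−t² / (2ν + (2/3) M t)). -/

import Mathlib

open MeasureTheory ProbabilityTheory Finset

open scoped ENNReal NNReal


lemma fact_aux (n : ℕ) : 2 * 3 ^ n ≤ (n + 2).factorial := by
  induction n with
  | zero => simp [Nat.factorial]
  | succ k ih =>
      have : (k + 3).factorial = (k + 3) * (k + 2).factorial := rfl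
      calc 2 * 3 ^ (k + 1) = 3 * (2 * 3 ^ k) := by ring
        _ ≤ 3 * (k + 2).factorial := by omega
        _ ≤ (k + 3) * (k + 2).factorial := by
            exact Nat.mul_le_mul_right _ (by omega)
        _ = (k + 3).factorial := this.symm

lemma exp_le_quadratic {x u : ℝ} (hu3 : u < 3) (hx : |x| ≤ u) :
    Real.exp x ≤ 1 + x + x ^ 2 / (2 * (1 - u / 3)) := by
  have hu0 : 0 ≤ u := le_trans (abs_nonneg x) hx
  have hc : 0 < 1 - u / 3 := by linarith
  have hsum : Summable (fun n => x ^ n / n.factorial : ℕ → ℝ) :=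
    Real.summable_pow_div_factorial x
  have hexp : Real.exp x = ∑' n : ℕ, x ^ n / n.factorial := by
    rw [Real.exp_eq_exp_ℝ, NormedSpace.exp_eq_tsum_div]
  have hsum2 : Summable (fun n => x ^ (n + 2) / (n + 2).factorial : ℕ → ℝ) :=
    (summable_nat_add_iff 2).2 hsum
  have hgeom : Summable (fun n => x ^ 2 / 2 * (u / 3) ^ n : ℕ → ℝ) := by
    refine Summable.mul_left _ (summable_geometric_of_lt_one (by positivity) (by linarith))
  have hterm : ∀ n : ℕ, x ^ (n + 2) / (n + 2).factorial ≤ x ^ 2 / 2 * (u / 3) ^ n := by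
    intro n
    have h1 : x ^ (n + 2) ≤ |x| ^ (n + 2) := by rw [← abs_pow]; exact le_abs_self _
    have h2 : |x| ^ (n + 2) = x ^ 2 * |x| ^ n := by
      rw [pow_add, sq_abs]; ring
    have h3 : |x| ^ n ≤ u ^ n := pow_le_pow_left₀ (abs_nonneg x) hx n
    have h4 : x ^ (n + 2) ≤ x ^ 2 * u ^ n := by
      calc x ^ (n + 2) ≤ |x| ^ (n + 2) := h1
        _ = x ^ 2 * |x| ^ n := h2
        _ ≤ x ^ 2 * u ^ n := by
            exact mul_le_mul_of_nonneg_left h3 (sq_nonneg x)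
    have h5 : (2 * 3 ^ n : ℝ) ≤ (n + 2).factorial := by
      exact_mod_cast fact_aux n
    have hfac : (0 : ℝ) < (n + 2).factorial := by positivity
    have h6 : x ^ (n + 2) / (n + 2).factorial ≤ (x ^ 2 * u ^ n) / (2 * 3 ^ n) := by
      calc x ^ (n + 2) / (n + 2).factorial ≤ (x ^ 2 * u ^ n) / (n + 2).factorial :=
            by
              have := mul_le_mul_of_nonneg_right h4 (le_of_lt (inv_pos.2 hfac))
              simpa [div_eq_mul_inv] using this
        _ ≤ (x ^ 2 * u ^ n) / (2 * 3 ^ n) := by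
            have h7 : (0:ℝ) < 2 * 3 ^ n := by positivity
            have h8 : ((2 * 3 ^ n : ℝ))⁻¹ ≥ ((n + 2).factorial : ℝ)⁻¹ := by
              exact inv_anti₀ h7 h5
            have := mul_le_mul_of_nonneg_left h8 (by positivity : (0:ℝ) ≤ x ^ 2 * u ^ n)
            simpa [div_eq_mul_inv] using this
    calc x ^ (n + 2) / (n + 2).factorial ≤ (x ^ 2 * u ^ n) / (2 * 3 ^ n) := h6
      _ = x ^ 2 / 2 * (u / 3) ^ n := by
          rw [div_pow]; ring
  have htail : (∑' n : ℕ, x ^ (n + 2) / (n + 2).factorial) ≤ x ^ 2 / (2 * (1 - u / 3)) := by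
    calc (∑' n : ℕ, x ^ (n + 2) / (n + 2).factorial)
        ≤ ∑' n : ℕ, x ^ 2 / 2 * (u / 3) ^ n := hsum2.tsum_le_tsum hterm hgeom
      _ = x ^ 2 / 2 * (1 - u / 3)⁻¹ := by
          rw [tsum_mul_left, tsum_geometric_of_lt_one (by positivity) (by linarith)]
      _ = x ^ 2 / (2 * (1 - u / 3)) := by
          field_simp
  have hfst : (∑ i ∈ Finset.range 2, x ^ i / i.factorial) = 1 + x := by
    simp [Finset.sum_range_succ, Nat.factorial]
  rw [hexp, ← Summable.sum_add_tsum_nat_add 2 hsum, hfst]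
  linarith

lemma mgf_single_bound {Ω : Type*} [MeasurableSpace Ω] (P : Measure Ω) [IsProbabilityMeasure P]
    (X : Ω → ℝ) (M l : ℝ) (hl : 0 < l) (hlM : l * M < 3)
    (hmeasX : Measurable X) (hintX : Integrable X P) (hmeanX : ∫ ω, X ω ∂P = 0)
    (hbddX : ∀ᵐ ω ∂P, |X ω| ≤ M) :
    ∫ ω, Real.exp (l * X ω) ∂P ≤
      Real.exp (l ^ 2 * variance X P / (2 * (1 - l * M / 3))) := by
  have hc : 0 < 1 - l * M / 3 := by linarith
  have hmem2 : MemLp X 2 P :=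
    memLp_of_bounded (hbddX.mono fun ω h => abs_le.1 h) hmeasX.aestronglyMeasurable 2
  have hXsq_int : Integrable (fun ω => X ω ^ 2) P := by
    have := hmem2.integrable_sq
    simpa [sq] using this
  set c := 1 - l * M / 3 with hcdef
  set g : Ω → ℝ := fun ω => 1 + l * X ω + l ^ 2 / (2 * c) * X ω ^ 2 with hg
  have hgint : Integrable g P := by
    exact ((integrable_const (1 : ℝ)).add (hintX.const_mul l)).add (hXsq_int.const_mul _)
  have hexp_int : Integrable (fun ω => Real.exp (l * X ω)) P := by
    refine Integrable.mono' (integrable_const (Real.exp (l * M)))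
      ((hmeasX.const_mul l).exp.aestronglyMeasurable) ?_
    filter_upwards [hbddX] with ω h
    rw [Real.norm_eq_abs, abs_of_pos (Real.exp_pos _)]
    exact Real.exp_le_exp.2 (mul_le_mul_of_nonneg_left ((le_abs_self _).trans h) hl.le)
  have hptwise : ∀ᵐ ω ∂P, Real.exp (l * X ω) ≤ g ω := by
    filter_upwards [hbddX] with ω h
    have hxu : |l * X ω| ≤ l * M := by
      rw [abs_mul, abs_of_pos hl]
      exact mul_le_mul_of_nonneg_left h hl.le
    have := exp_le_quadratic hlM hxu
    calc Real.exp (l * X ω) ≤ 1 + l * X ω + (l * X ω) ^ 2 / (2 * (1 - l * M / 3)) := this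
      _ = g ω := by rw [hg]; simp only [← hcdef]; ring
  have hintle : ∫ ω, Real.exp (l * X ω) ∂P ≤ ∫ ω, g ω ∂P :=
    integral_mono_ae hexp_int hgint hptwise
  have hvar : ∫ ω, X ω ^ 2 ∂P = variance X P := by
    rw [variance_eq_sub hmem2, hmeanX]
    simp [sq]
  have h1 : Integrable (fun ω => l * X ω) P := hintX.const_mul l
  have h2 : Integrable (fun ω => l ^ 2 / (2 * c) * X ω ^ 2) P := hXsq_int.const_mul _
  have h12 : Integrable (fun ω => 1 + l * X ω) P := (integrable_const 1).add h1
  have hgval : ∫ ω, g ω ∂P = 1 + l ^ 2 / (2 * c) * variance X P := by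
    simp only [hg]
    rw [integral_add h12 h2, integral_add (integrable_const 1) h1,
      integral_const, integral_const_mul, integral_const_mul, hmeanX, hvar]
    simp
  have hfinal : 1 + l ^ 2 / (2 * c) * variance X P ≤
      Real.exp (l ^ 2 * variance X P / (2 * c)) := by
    have := Real.add_one_le_exp (l ^ 2 * variance X P / (2 * c))
    have heq : l ^ 2 / (2 * c) * variance X P = l ^ 2 * variance X P / (2 * c) := by ring
    linarith [heq]
  calc ∫ ω, Real.exp (l * X ω) ∂P ≤ ∫ ω, g ω ∂P := hintle
    _ = 1 + l ^ 2 / (2 * c) * variance X P := hgval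
    _ ≤ Real.exp (l ^ 2 * variance X P / (2 * c)) := hfinal

lemma bernstein_onesided {Ω : Type*} [MeasurableSpace Ω] (P : Measure Ω) [IsProbabilityMeasure P]
    (n : ℕ) (Z : Fin n → Ω → ℝ) (M ν : ℝ) (hM : 0 < M) (hν : 0 < ν)
    (hmeas : ∀ i, Measurable (Z i))
    (hindep : iIndepFun Z P)
    (hint : ∀ i, Integrable (Z i) P)
    (hmean : ∀ i, ∫ ω, Z i ω ∂P = 0)
    (hbdd : ∀ i, ∀ᵐ ω ∂P, |Z i ω| ≤ M)
    (hvar : variance (fun ω => ∑ i, Z i ω) P ≤ ν)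
    (t : ℝ) (ht : 0 < t) :
    (P {ω | ∃ q : ℕ, q ≤ n ∧
        t < ∑ i ∈ Finset.univ.filter (fun i : Fin n => (i : ℕ) < q), Z i ω}).toReal ≤
      Real.exp (-(t ^ 2) / (2 * ν + (2 / 3) * M * t)) := by
  classical
  set D : ℝ := ν + M * t / 3 with hD
  have hD0 : 0 < D := by
    have : 0 < M * t / 3 := by positivity
    rw [hD]; linarith
  set l : ℝ := t / D with hldef
  have hl : 0 < l := div_pos ht hD0
  have hlM3 : l * M < 3 := by
    rw [hldef, div_mul_eq_mul_div, div_lt_iff₀ hD0, hD]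
    nlinarith
  have hc : 0 < 1 - l * M / 3 := by linarith
  -- partial sums and exponential process
  set S : ℕ → Ω → ℝ :=
    fun q ω => ∑ i ∈ Finset.univ.filter (fun i : Fin n => (i : ℕ) < q), Z i ω with hS
  set f : ℕ → Ω → ℝ := fun q ω => Real.exp (l * S q ω) with hf
  have hSmeas : ∀ q, Measurable (S q) := fun q =>
    Finset.measurable_sum _ fun i _ => hmeas i
  have hbddall : ∀ᵐ ω ∂P, ∀ i, |Z i ω| ≤ M := ae_all_iff.2 hbdd
  have hSbdd : ∀ q, ∀ᵐ ω ∂P, |S q ω| ≤ n * M := by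
    intro q
    filter_upwards [hbddall] with ω h
    calc |S q ω| ≤ ∑ i ∈ Finset.univ.filter (fun i : Fin n => (i : ℕ) < q), |Z i ω| :=
          Finset.abs_sum_le_sum_abs _ _
      _ ≤ ∑ _i ∈ Finset.univ.filter (fun i : Fin n => (i : ℕ) < q), M :=
          Finset.sum_le_sum fun i _ => h i
      _ = (Finset.univ.filter (fun i : Fin n => (i : ℕ) < q)).card * M := by
          rw [Finset.sum_const, nsmul_eq_mul]
      _ ≤ n * M := by
          refine mul_le_mul_of_nonneg_right ?_ hM.le
          exact_mod_cast (Finset.card_filter_le _ _).trans (by simp)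
  have hfint : ∀ q, Integrable (f q) P := by
    intro q
    refine Integrable.mono' (integrable_const (Real.exp (l * (n * M))))
      (((hSmeas q).const_mul l).exp.aestronglyMeasurable) ?_
    filter_upwards [hSbdd q] with ω h
    rw [Real.norm_eq_abs, abs_of_pos (Real.exp_pos _)]
    exact Real.exp_le_exp.2 (mul_le_mul_of_nonneg_left ((le_abs_self _).trans h) hl.le)
  -- the filtration
  set 𝒢 : Filtration ℕ ‹MeasurableSpace Ω› :=
    { seq := fun q => ⨆ i ∈ {i : Fin n | (i : ℕ) < q},
        MeasurableSpace.comap (Z i) inferInstance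
      mono' := fun q q' hqq' => by
        refine biSup_mono fun i hi => ?_
        exact lt_of_lt_of_le hi hqq'
      le' := fun q => iSup₂_le fun i _ => (hmeas i).comap_le } with h𝒢
  have hZmeas𝒢 : ∀ (q : ℕ) (i : Fin n), (i : ℕ) < q → Measurable[𝒢 q] (Z i) := by
    intro q i hi
    have h1 : Measurable[MeasurableSpace.comap (Z i) inferInstance] (Z i) :=
      measurable_iff_comap_le.2 le_rfl
    exact h1.mono (le_iSup₂ (f := fun (i : Fin n) (_ : (i : ℕ) < q) =>
      MeasurableSpace.comap (Z i) inferInstance) i hi) le_rfl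
  have hadp : StronglyAdapted 𝒢 f := by
    intro q
    apply Measurable.stronglyMeasurable
    have hSm : Measurable[𝒢 q] (S q) := by
      refine Finset.measurable_sum _ fun i hi => ?_
      exact hZmeas𝒢 q i (by simpa using hi)
    exact (hSm.const_mul l).exp
  have hstep : ∀ q, f q ≤ᵐ[P] P[f (q + 1)|𝒢 q] := by
    intro q
    by_cases hq : q < n
    · set j : Fin n := ⟨q, hq⟩ with hj
      have hjnot : j ∉ Finset.univ.filter (fun i : Fin n => (i : ℕ) < q) := by simp [hj]
      have hsplitset : Finset.univ.filter (fun i : Fin n => (i : ℕ) < q + 1)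
          = insert j (Finset.univ.filter (fun i : Fin n => (i : ℕ) < q)) := by
        ext i
        simp only [Finset.mem_filter, Finset.mem_univ, true_and, Finset.mem_insert]
        constructor
        · intro h
          rcases Nat.lt_succ_iff_lt_or_eq.1 h with h' | h'
          · exact Or.inr h'
          · exact Or.inl (Fin.ext h')
        · rintro (rfl | h)
          · exact Nat.lt_succ_self _
          · exact Nat.lt_succ_of_lt h
      set g : Ω → ℝ := fun ω => Real.exp (l * Z j ω) with hgdef
      have hfs : f (q + 1) = f q * g := by
        funext ω
        simp only [hf, hS, hsplitset, Finset.sum_insert hjnot, Pi.mul_apply, hgdef]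
        rw [← Real.exp_add]
        ring_nf
      have hgint : Integrable g P := by
        refine Integrable.mono' (integrable_const (Real.exp (l * M)))
          (((hmeas j).const_mul l).exp.aestronglyMeasurable) ?_
        filter_upwards [hbdd j] with ω h
        rw [Real.norm_eq_abs, abs_of_pos (Real.exp_pos _)]
        exact Real.exp_le_exp.2 (mul_le_mul_of_nonneg_left ((le_abs_self _).trans h) hl.le)
      have hfgint : Integrable (f q * g) P := by
        rw [← hfs]; exact hfint (q + 1)
      have hpull : P[f q * g|𝒢 q] =ᵐ[P] f q * P[g|𝒢 q] :=
        condExp_mul_of_stronglyMeasurable_left (hadp q) hfgint hgint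
      have hdisj : Disjoint ({j} : Set (Fin n)) {i : Fin n | (i : ℕ) < q} := by
        simp [Set.disjoint_left, hj]
      have hindepj : Indep (MeasurableSpace.comap (Z j) inferInstance) (𝒢 q) P := by
        have h := indep_iSup_of_disjoint (fun i => (hmeas i).comap_le) hindep hdisj
        simpa [h𝒢] using h
      have hgm : StronglyMeasurable[MeasurableSpace.comap (Z j) inferInstance] g := by
        apply Measurable.stronglyMeasurable
        exact ((measurable_iff_comap_le.2 le_rfl).const_mul l).exp
      have hcond : P[g|𝒢 q] =ᵐ[P] fun _ => ∫ ω, g ω ∂P :=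
        condExp_indep_eq (hmeas j).comap_le (𝒢.le q) hgm hindepj
      have hg1 : 1 ≤ ∫ ω, g ω ∂P := by
        have hint1 : Integrable (fun ω => 1 + l * Z j ω) P :=
          (integrable_const 1).add ((hint j).const_mul l)
        have hmono := integral_mono hint1 hgint (fun ω => by
          have := Real.add_one_le_exp (l * Z j ω)
          simp only [hgdef]
          linarith)
        rwa [integral_add (integrable_const 1) ((hint j).const_mul l), integral_const,
          integral_const_mul, hmean j, probReal_univ, smul_eq_mul,
          mul_one, mul_zero, add_zero] at hmono
      rw [hfs]
      filter_upwards [hpull, hcond] with ω h1 h2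
      rw [h1, Pi.mul_apply, h2]
      have hfq : 0 ≤ f q ω := (Real.exp_pos _).le
      calc f q ω = f q ω * 1 := (mul_one _).symm
        _ ≤ f q ω * ∫ ω', g ω' ∂P := mul_le_mul_of_nonneg_left hg1 hfq
    · push_neg at hq
      have hfilteq : Finset.univ.filter (fun i : Fin n => (i : ℕ) < q + 1)
          = Finset.univ.filter (fun i : Fin n => (i : ℕ) < q) := by
        ext i
        simp only [Finset.mem_filter, Finset.mem_univ, true_and]
        constructor
        · intro _; exact lt_of_lt_of_le i.isLt hq
        · intro _; exact lt_of_lt_of_le i.isLt (le_trans hq (Nat.le_succ _))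
      have hfeq : f (q + 1) = f q := by
        funext ω
        simp only [hf, hS, hfilteq]
      rw [hfeq, condExp_of_stronglyMeasurable (𝒢.le q) (hadp q) (hfint q)]
  have hsub : Submartingale f 𝒢 P := submartingale_nat hadp hfint hstep
  have hnonneg : 0 ≤ f := fun q ω => (Real.exp_pos _).le
  set ε : NNReal := ⟨Real.exp (l * t), (Real.exp_pos _).le⟩ with hε
  have hmax := maximal_ineq hsub hnonneg (ε := ε) n
  set A := {ω | (ε : ℝ) ≤ (Finset.range (n + 1)).sup' Finset.nonempty_range_add_one
    fun k => f k ω} with hA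
  have hfn_nonneg : 0 ≤ᵐ[P] f n := Filter.Eventually.of_forall fun ω => (Real.exp_pos _).le
  have hAint : ∫ ω in A, f n ω ∂P ≤ ∫ ω, f n ω ∂P :=
    setIntegral_le_integral (hfint n) hfn_nonneg
  set I : ℝ := ∫ ω, f n ω ∂P with hI
  have hI0 : 0 ≤ I := integral_nonneg fun ω => (Real.exp_pos _).le
  have hsubset : {ω | ∃ q : ℕ, q ≤ n ∧
      t < ∑ i ∈ Finset.univ.filter (fun i : Fin n => (i : ℕ) < q), Z i ω} ⊆ A := by
    rintro ω ⟨q, hq, hqt⟩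
    have h1 : (ε : ℝ) ≤ f q ω := by
      simp only [hε, hf]
      exact Real.exp_le_exp.2 (mul_le_mul_of_nonneg_left hqt.le hl.le)
    exact le_trans h1 (Finset.le_sup' (fun k => f k ω)
      (Finset.mem_range.2 (Nat.lt_succ_of_le hq)))
  have hεpos : (0 : ℝ) < (ε : ℝ) := Real.exp_pos _
  have hεne : (ε : ℝ≥0∞) ≠ 0 := by
    simp only [ne_eq, ENNReal.coe_eq_zero]
    intro h
    exact hεpos.ne' (congrArg NNReal.toReal h)
  have hPA : P A ≤ ENNReal.ofReal (I / (ε : ℝ)) := by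
    have h1 : (ε : ℝ≥0∞) * P A ≤ ENNReal.ofReal I := by
      refine le_trans ?_ (ENNReal.ofReal_le_ofReal hAint)
      simpa [ENNReal.smul_def] using hmax
    have h2 : P A ≤ ENNReal.ofReal I / (ε : ℝ≥0∞) := by
      rw [ENNReal.le_div_iff_mul_le (Or.inl hεne) (Or.inl ENNReal.coe_ne_top), mul_comm]
      exact h1
    have h3 : (ε : ℝ≥0∞) = ENNReal.ofReal (ε : ℝ) := by
      rw [ENNReal.ofReal, Real.toNNReal_coe]
    rwa [h3, ← ENNReal.ofReal_div_of_pos hεpos] at h2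
  have hPEv : (P {ω | ∃ q : ℕ, q ≤ n ∧
      t < ∑ i ∈ Finset.univ.filter (fun i : Fin n => (i : ℕ) < q), Z i ω}).toReal
      ≤ I / (ε : ℝ) := by
    have := le_trans (measure_mono hsubset) hPA
    have h4 := ENNReal.toReal_mono ENNReal.ofReal_ne_top this
    rwa [ENNReal.toReal_ofReal (by positivity)] at h4
  -- bound I via the mgf
  have hmem2 : ∀ i : Fin n, MemLp (Z i) 2 P := fun i =>
    memLp_of_bounded ((hbdd i).mono fun ω h => abs_le.1 h) (hmeas i).aestronglyMeasurable 2
  have hvarsum : ∑ i, variance (Z i) P ≤ ν := by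
    have h := IndepFun.variance_sum (μ := P) (X := Z) (s := Finset.univ)
      (fun i _ => hmem2 i) (fun i _ j _ hij => hindep.indepFun hij)
    rw [← h]
    have : (∑ i, Z i) = fun ω => ∑ i, Z i ω := by
      funext ω; simp [Finset.sum_apply]
    rwa [this]
  have hfiltn : Finset.univ.filter (fun i : Fin n => (i : ℕ) < n) = Finset.univ := by
    ext i; simp [i.isLt]
  have hImgf : I = mgf (∑ i, Z i) P l := by
    rw [hI, mgf]
    congr 1
    funext ω
    simp only [hf, hS, hfiltn, Finset.sum_apply]
  have hIle : I ≤ Real.exp (l ^ 2 * ν / (2 * (1 - l * M / 3))) := by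
    rw [hImgf, iIndepFun.mgf_sum hindep hmeas Finset.univ]
    calc (∏ i, mgf (Z i) P l)
        ≤ ∏ i, Real.exp (l ^ 2 * variance (Z i) P / (2 * (1 - l * M / 3))) := by
          refine Finset.prod_le_prod (fun i _ => mgf_nonneg) (fun i _ => ?_)
          exact mgf_single_bound P (Z i) M l hl hlM3 (hmeas i) (hint i) (hmean i) (hbdd i)
      _ = Real.exp (∑ i, l ^ 2 * variance (Z i) P / (2 * (1 - l * M / 3))) :=
          (Real.exp_sum _ _).symm
      _ ≤ Real.exp (l ^ 2 * ν / (2 * (1 - l * M / 3))) := by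
          rw [Real.exp_le_exp]
          have : ∑ i, l ^ 2 * variance (Z i) P / (2 * (1 - l * M / 3))
              = l ^ 2 * (∑ i, variance (Z i) P) / (2 * (1 - l * M / 3)) := by
            rw [Finset.mul_sum, Finset.sum_div]
          rw [this]
          have h2c : 0 < 2 * (1 - l * M / 3) := by linarith
          exact div_le_div_of_nonneg_right
            (mul_le_mul_of_nonneg_left hvarsum (sq_nonneg l)) h2c.le
  have hDne : ν + M * t / 3 ≠ 0 := by positivity
  have hfinal : I / (ε : ℝ) ≤ Real.exp (-(t ^ 2) / (2 * ν + (2 / 3) * M * t)) := by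
    have h5 : I / (ε : ℝ) ≤ Real.exp (l ^ 2 * ν / (2 * (1 - l * M / 3))) / (ε : ℝ) :=
      div_le_div_of_nonneg_right hIle hεpos.le
    have hεval : (ε : ℝ) = Real.exp (l * t) := rfl
    have h6 : Real.exp (l ^ 2 * ν / (2 * (1 - l * M / 3))) / (ε : ℝ)
        = Real.exp (l ^ 2 * ν / (2 * (1 - l * M / 3)) - l * t) := by
      rw [hεval, ← Real.exp_sub]
    have hcD : 1 - l * M / 3 = ν / D := by
      rw [hldef, hD]
      field_simp
      ring
    have harith : l ^ 2 * ν / (2 * (1 - l * M / 3)) - l * t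
        = -(t ^ 2) / (2 * ν + (2 / 3) * M * t) := by
      have hDne2 : 2 * ν + 2 / 3 * M * t ≠ 0 := by positivity
      rw [hcD, hldef, hD]
      field_simp
      ring
    refine le_trans h5 (le_of_eq ?_)
    rw [h6, harith]
  exact le_trans hPEv hfinal

/-- maximal version of Bernstein's inequality for independent, centered,
bounded random variables. -/
theorem bernstein_maximal {Ω : Type*} [MeasurableSpace Ω] (P : Measure Ω) [IsProbabilityMeasure P]
    (n : ℕ) (Z : Fin n → Ω → ℝ) (M ν : ℝ) (hM : 0 < M) (hν : 0 < ν)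
    (hmeas : ∀ i, Measurable (Z i))
    (hindep : iIndepFun Z P)
    (hint : ∀ i, Integrable (Z i) P)
    (hmean : ∀ i, ∫ ω, Z i ω ∂P = 0)
    (hbdd : ∀ i, ∀ᵐ ω ∂P, |Z i ω| ≤ M)
    (hvar : variance (fun ω => ∑ i, Z i ω) P ≤ ν) :
    ∀ t : ℝ, 0 < t →
      (P {ω | ∃ q : ℕ, q ≤ n ∧
          t < |∑ i ∈ Finset.univ.filter (fun i : Fin n => (i : ℕ) < q), Z i ω|}).toReal ≤
        2 * Real.exp (-(t ^ 2) / (2 * ν + (2 / 3) * M * t)) := by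
  intro t ht
  set W : Fin n → Ω → ℝ := fun i ω => -Z i ω with hW
  have hWmeas : ∀ i, Measurable (W i) := fun i => (hmeas i).neg
  have hWindep : iIndepFun W P :=
    hindep.comp (fun _ => fun x : ℝ => -x) (fun _ => measurable_neg)
  have hWint : ∀ i, Integrable (W i) P := fun i => (hint i).neg
  have hWmean : ∀ i, ∫ ω, W i ω ∂P = 0 := fun i => by
    simp only [hW, integral_neg, hmean i, neg_zero]
  have hWbdd : ∀ i, ∀ᵐ ω ∂P, |W i ω| ≤ M := fun i =>
    (hbdd i).mono fun ω h => by simpa [hW, abs_neg] using h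
  have hWvar : variance (fun ω => ∑ i, W i ω) P ≤ ν := by
    have heq : (fun ω => ∑ i, W i ω) = (-1 : ℝ) • (fun ω => ∑ i, Z i ω) := by
      funext ω
      simp [hW, Finset.sum_neg_distrib]
    rw [heq, variance_smul]
    simpa using hvar
  have h1 := bernstein_onesided P n Z M ν hM hν hmeas hindep hint hmean hbdd hvar t ht
  have h2 := bernstein_onesided P n W M ν hM hν hWmeas hWindep hWint hWmean hWbdd hWvar t ht
  set B1 := {ω | ∃ q : ℕ, q ≤ n ∧
    t < ∑ i ∈ Finset.univ.filter (fun i : Fin n => (i : ℕ) < q), Z i ω} with hB1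
  set B2 := {ω | ∃ q : ℕ, q ≤ n ∧
    t < ∑ i ∈ Finset.univ.filter (fun i : Fin n => (i : ℕ) < q), W i ω} with hB2
  have hsub : {ω | ∃ q : ℕ, q ≤ n ∧
      t < |∑ i ∈ Finset.univ.filter (fun i : Fin n => (i : ℕ) < q), Z i ω|} ⊆ B1 ∪ B2 := by
    rintro ω ⟨q, hq, hqt⟩
    rcases lt_abs.1 hqt with h | h
    · exact Or.inl ⟨q, hq, h⟩
    · refine Or.inr ⟨q, hq, ?_⟩
      have : ∑ i ∈ Finset.univ.filter (fun i : Fin n => (i : ℕ) < q), W i ω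
          = -∑ i ∈ Finset.univ.filter (fun i : Fin n => (i : ℕ) < q), Z i ω := by
        simp [hW, Finset.sum_neg_distrib]
      rw [this]
      exact h
  have hle := (measure_mono hsub).trans (measure_union_le (μ := P) B1 B2)
  have hne1 : P B1 ≠ ⊤ := measure_ne_top P _
  have hne2 : P B2 ≠ ⊤ := measure_ne_top P _
  calc (P {ω | ∃ q : ℕ, q ≤ n ∧
      t < |∑ i ∈ Finset.univ.filter (fun i : Fin n => (i : ℕ) < q), Z i ω|}).toReal
      ≤ (P B1 + P B2).toReal :=
        ENNReal.toReal_mono (ENNReal.add_ne_top.2 ⟨hne1, hne2⟩) hle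
    _ = (P B1).toReal + (P B2).toReal := ENNReal.toReal_add hne1 hne2
    _ ≤ Real.exp (-(t ^ 2) / (2 * ν + (2 / 3) * M * t))
        + Real.exp (-(t ^ 2) / (2 * ν + (2 / 3) * M * t)) := add_le_add h1 h2
    _ = 2 * Real.exp (-(t ^ 2) / (2 * ν + (2 / 3) * M * t)) := by ring
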